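/- Along any solution of the Lorentz-Dirac comparison dynamics m(v)v̇ = e(E_ex(q) + v × B_ex(q)) + ε(e²/6π)[γ⁴(v·v̈)v + 3γ⁶(v·v̇)²v + 3γ⁴(v·v̇)v̇ + γ²v̈] with q̇ = v, the modified energy G_ε(q,v,v̇) = E_s(v) + eφ_ex(q) - ε(e²/6π)γ⁴(v·v̇) satisfies dG_ε/dt = -ε(e²/6π)[γ⁴ v̇² + γ⁶ (v·v̇)²]; in particular G_ε is nonincreasing along solutions. -/

import Mathlib

open Real
open scoped RealInnerProductSpace

noncomputable def cross3 (a b : EuclideanSpace ℝ (Fin 3)) : EuclideanSpace ℝ (Fin 3) :=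
  (WithLp.equiv 2 (Fin 3 → ℝ)).symm
    ![a 1 * b 2 - a 2 * b 1, a 2 * b 0 - a 0 * b 2, a 0 * b 1 - a 1 * b 0]

lemma inner_cross3_self (v B : EuclideanSpace ℝ (Fin 3)) : ⟪v, cross3 v B⟫ = 0 := by
  simp [cross3, PiLp.inner_apply, Fin.sum_univ_three]
  ring

/-- Energy balance for the Lorentz–Dirac comparison dynamics: along any solution,
the modified energy `G_ε = E_s(v) + eφ_ex(q) - ε(e²/6π)γ⁴(v·v̇)` (which includes the
Schott term) satisfies `dG_ε/dt = -ε(e²/6π)[γ⁴ v̇² + γ⁶ (v·v̇)²]`; in particular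
`G_ε` is nonincreasing along solutions. -/
theorem schott_energy_balance
    (e ε : ℝ) (hε : 0 ≤ ε)
    (φex : EuclideanSpace ℝ (Fin 3) → ℝ)
    (Eex Bex : EuclideanSpace ℝ (Fin 3) → EuclideanSpace ℝ (Fin 3))
    (hEex : ∀ x, HasGradientAt φex (-(Eex x)) x)
    (Es : EuclideanSpace ℝ (Fin 3) → ℝ)
    (M : EuclideanSpace ℝ (Fin 3) →
      (EuclideanSpace ℝ (Fin 3) →ₗ[ℝ] EuclideanSpace ℝ (Fin 3)))
    (q v a b : ℝ → EuclideanSpace ℝ (Fin 3))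
    (hq : ∀ t, HasDerivAt q (v t) t)
    (hv : ∀ t, HasDerivAt v (a t) t)
    (ha : ∀ t, HasDerivAt a (b t) t)
    (hv1 : ∀ t, ‖v t‖ < 1)
    (γ : ℝ → ℝ) (hγ : ∀ t, γ t = (Real.sqrt (1 - ‖v t‖^2))⁻¹)
    (hM : ∀ t, HasDerivAt (fun s => Es (v s)) ⟪v t, M (v t) (a t)⟫ t)
    (hODE : ∀ t, M (v t) (a t)
      = e • (Eex (q t) + cross3 (v t) (Bex (q t)))
        + (ε * (e^2 / (6 * π))) •
          ((γ t ^ 4 * ⟪v t, b t⟫) • v t + (3 * γ t ^ 6 * ⟪v t, a t⟫^2) • v t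
            + (3 * γ t ^ 4 * ⟪v t, a t⟫) • a t + (γ t ^ 2) • b t)) :
    (∀ t, HasDerivAt
        (fun s => Es (v s) + e * φex (q s) - ε * (e^2 / (6 * π)) * γ s ^ 4 * ⟪v s, a s⟫)
        (-(ε * (e^2 / (6 * π)) * (γ t ^ 4 * ‖a t‖^2 + γ t ^ 6 * ⟪v t, a t⟫^2))) t)
    ∧ Antitone (fun s => Es (v s) + e * φex (q s)
        - ε * (e^2 / (6 * π)) * γ s ^ 4 * ⟪v s, a s⟫) := by
  have hu : ∀ s, (0:ℝ) < 1 - ‖v s‖^2 := by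
    intro s; nlinarith [hv1 s, norm_nonneg (v s)]
  -- derivative of 1 - ‖v‖²
  have hn : ∀ s, HasDerivAt (fun r => 1 - ‖v r‖^2) (-(2*⟪v s, a s⟫)) s := by
    intro s
    have h1 : HasDerivAt (fun r => ⟪v r, v r⟫) (⟪v s, a s⟫ + ⟪a s, v s⟫) s :=
      (hv s).inner ℝ (hv s)
    have h2 : HasDerivAt (fun r => 1 - ⟪v r, v r⟫) (-(⟪v s, a s⟫ + ⟪a s, v s⟫)) s :=
      h1.const_sub 1
    have hf : (fun r => 1 - ⟪v r, v r⟫) = fun r => 1 - ‖v r‖^2 := by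
      funext r; rw [real_inner_self_eq_norm_sq]
    rw [hf] at h2
    convert h2 using 1
    rw [real_inner_comm (a s) (v s)]; ring
  -- rewrite γ⁴ as (1-‖v‖²)⁻²
  have hγ2 : ∀ s, γ s ^ 2 = (1 - ‖v s‖^2)⁻¹ := by
    intro s
    rw [hγ, inv_pow, Real.sq_sqrt (hu s).le]
  have hfun : (fun s => γ s ^ 4) = fun s => ((1 - ‖v s‖^2)^2)⁻¹ := by
    funext s
    have : γ s ^ 4 = (γ s ^ 2) ^ 2 := by ring
    rw [this, hγ2, ← inv_pow]
  have key : ∀ t, HasDerivAt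
      (fun s => Es (v s) + e * φex (q s) - ε * (e^2 / (6 * π)) * γ s ^ 4 * ⟪v s, a s⟫)
      (-(ε * (e^2 / (6 * π)) * (γ t ^ 4 * ‖a t‖^2 + γ t ^ 6 * ⟪v t, a t⟫^2))) t := by
    intro t
    have hφ : HasDerivAt (fun s => φex (q s)) ⟪-(Eex (q t)), v t⟫ t := by
      have := ((hEex (q t)).hasFDerivAt).comp_hasDerivAt t (hq t)
      simp at this
      convert this using 1
      · rfl
      · rfl
      · rfl
      · exact inner_neg_left _ _
    have hva : HasDerivAt (fun s => ⟪v s, a s⟫) (⟪v t, b t⟫ + ⟪a t, a t⟫) t :=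
      (hv t).inner ℝ (ha t)
    have hγ4 : HasDerivAt (fun s => γ s ^ 4)
        (-((2:ℕ) * (1 - ‖v t‖^2) ^ (2-1) * -(2*⟪v t, a t⟫)) / ((1 - ‖v t‖^2)^2)^2) t := by
      rw [hfun]
      exact ((hn t).pow 2).inv (pow_ne_zero 2 (hu t).ne')
    have hlast := ((hγ4.const_mul (ε * (e^2 / (6 * π)))).mul hva)
    have hG := ((hM t).add (hφ.const_mul e)).sub hlast
    convert hG using 1
    · rfl
    · rfl
    · rfl
    -- equality of derivative values
    rw [hODE t]
    simp only [inner_add_right, inner_smul_right, real_inner_self_eq_norm_sq,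
      inner_cross3_self, inner_neg_left, real_inner_comm (Eex (q t)) (v t)]
    have hg2 := hγ2 t
    have hnz : (1 - ‖v t‖^2) ≠ 0 := (hu t).ne'
    have h4 : γ t ^ 4 = ((1 - ‖v t‖^2)^2)⁻¹ := by
      have : γ t ^ 4 = (γ t ^ 2) ^ 2 := by ring
      rw [this, hg2, ← inv_pow]
    have h6 : γ t ^ 6 = ((1 - ‖v t‖^2)^3)⁻¹ := by
      have : γ t ^ 6 = (γ t ^ 2) ^ 3 := by ring
      rw [this, hg2, ← inv_pow]
    rw [h4, h6, hg2]
    field_simp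
    ring
  refine ⟨key, antitone_of_hasDerivAt_nonpos key ?_⟩
  intro t
  simp only [Pi.zero_apply]
  have h4 : (0:ℝ) ≤ γ t ^ 4 := by positivity
  have h6 : (0:ℝ) ≤ γ t ^ 6 := by positivity
  have hπ : (0:ℝ) < π := Real.pi_pos
  have : (0:ℝ) ≤ ε * (e^2 / (6 * π)) * (γ t ^ 4 * ‖a t‖^2 + γ t ^ 6 * ⟪v t, a t⟫^2) := by
    apply mul_nonneg
    · positivity
    · have := sq_nonneg ⟪v t, a t⟫
      have := sq_nonneg ‖a t‖
      nlinarith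
  linarith
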